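/- Let m ≥ 2 and r ≥ 1. The collection R = { {1,…,m−1} ∪ {m−1+j} : 1 ≤ j ≤ r } is a closed set family of shape (m^r) whose type is defined and equals the partition (m+r−1, (m−1)^{r−1}) of mr. Moreover R is a minimal set family: no set family of shape (m^r) has a defined type strictly dominated by (m+r−1, (m−1)^{r−1}). -/

import Mathlib

/-- The multiplicity of `i` in a set family `P`: the number of sets in `P` containing `i`. -/
def famMult (P : Finset (Finset ℕ)) (i : ℕ) : ℕ := (P.filter fun S => i ∈ S).card

/-- `P` is a set family of shape `(m^n)`: a collection of `n` distinct `m`-subsets of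
the positive integers. -/
def IsSetFamily (m n : ℕ) (P : Finset (Finset ℕ)) : Prop :=
  P.card = n ∧ ∀ S ∈ P, S.card = m ∧ ∀ x ∈ S, 1 ≤ x

/-- `B` majorizes `A` (written `A ⪯ B`): the `r`-th smallest element of `A` is at most
the `r`-th smallest element of `B` (the sets in question have the same cardinality). -/
def SetMaj (A B : Finset ℕ) : Prop :=
  ∀ r : ℕ, (A.sort (· ≤ ·)).getD r 0 ≤ (B.sort (· ≤ ·)).getD r 0

/-- A set family (of `m`-subsets) is closed if it is downward closed under majorization. -/
def ClosedFam (m : ℕ) (P : Finset (Finset ℕ)) : Prop :=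
  ∀ B ∈ P, ∀ A : Finset ℕ, A.card = m → (∀ x ∈ A, 1 ≤ x) → SetMaj A B → A ∈ P

/-- The type of a family (or tuple) whose multiplicity function is `f` is defined exactly
when `f` is weakly decreasing on the positive integers; then `f` is the conjugate `λ'`
of the type `λ`. -/
def TypeDefined (f : ℕ → ℕ) : Prop := ∀ i j : ℕ, 1 ≤ i → i ≤ j → f j ≤ f i

/-- The sum of the first `j` parts of the partition `λ` whose conjugate is `f`:
`λ_1 + ⋯ + λ_j = Σ_x min (λ'_x) j`. -/
noncomputable def partSum (f : ℕ → ℕ) (j : ℕ) : ℕ := ∑ᶠ x, min (f x) j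

/-- Dominance order: the partition with conjugate `g` is dominated (`⊴`) by the partition
with conjugate `f`. -/
def ConjDom (g f : ℕ → ℕ) : Prop := ∀ j : ℕ, partSum g j ≤ partSum f j

/-- Strict dominance `⊲` of the partition with conjugate `g` by the one with conjugate `f`. -/
def ConjStrictDom (g f : ℕ → ℕ) : Prop := ConjDom g f ∧ ∃ i : ℕ, 1 ≤ i ∧ g i ≠ f i

/-- The total multiplicity of `i` over a tuple of set families. -/
def tupMult {k : ℕ} (P : Fin k → Finset (Finset ℕ)) (i : ℕ) : ℕ := ∑ j, famMult (P j) i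

/-- The set family `{ {1,…,m-1} ∪ {m-1+j} : 1 ≤ j ≤ r }`. -/
def hookFam (m r : ℕ) : Finset (Finset ℕ) :=
  (Finset.Icc 1 r).image fun j => insert (m - 1 + j) (Finset.Icc 1 (m - 1))


section Helpers
open Finset

lemma hook_injOn (m r : ℕ) :
    Set.InjOn (fun j => insert (m - 1 + j) (Finset.Icc 1 (m - 1))) ↑(Finset.Icc 1 r) := by
  intro a ha b hb h
  simp only [coe_Icc, Set.mem_Icc] at ha hb
  simp only [] at h
  have : m - 1 + a ∈ insert (m - 1 + b) (Finset.Icc 1 (m - 1)) := by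
    rw [← h]; exact mem_insert_self _ _
  rcases mem_insert.1 this with h' | h'
  · omega
  · rw [mem_Icc] at h'; omega

lemma filter_hook (m r x : ℕ) (hm : 2 ≤ m) :
    ((Finset.Icc 1 r).filter fun j => x ∈ insert (m - 1 + j) (Finset.Icc 1 (m - 1))) =
      if 1 ≤ x ∧ x ≤ m - 1 then Finset.Icc 1 r
      else if m ≤ x ∧ x ≤ m + r - 1 then {x - (m - 1)} else ∅ := by
  split_ifs with h1 h2
  · apply filter_true_of_mem; intro j hj
    simp only [mem_insert, mem_Icc]; omega
  · ext j; simp only [mem_filter, mem_insert, mem_Icc, mem_singleton]; omega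
  · ext j; simp only [mem_filter, mem_insert, mem_Icc, notMem_empty, iff_false, not_and, not_or]
    omega

lemma famMult_hook (m r : ℕ) (hm : 2 ≤ m) (x : ℕ) :
    famMult (hookFam m r) x =
      if 1 ≤ x ∧ x ≤ m - 1 then r else if m ≤ x ∧ x ≤ m + r - 1 then 1 else 0 := by
  unfold famMult hookFam
  rw [Finset.filter_image]
  rw [Finset.card_image_of_injOn ((hook_injOn m r).mono (by exact_mod_cast filter_subset _ _))]
  have := filter_hook m r x hm
  rw [this]
  split_ifs
  · rw [Nat.card_Icc]; omega
  · exact card_singleton _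
  · exact card_empty

lemma partSum_eq_sum (f : ℕ → ℕ) (s : Finset ℕ) (hs : ∀ x, f x ≠ 0 → x ∈ s) (j : ℕ) :
    partSum f j = ∑ x ∈ s, min (f x) j := by
  apply finsum_eq_finset_sum_of_support_subset
  intro x hx
  simp only [Function.mem_support] at hx
  exact hs x (by intro h; rw [h] at hx; simp at hx)

lemma famMult_le (P : Finset (Finset ℕ)) (x : ℕ) : famMult P x ≤ P.card :=
  card_le_card (filter_subset _ _)

lemma famMult_supp (P : Finset (Finset ℕ)) (x : ℕ) (h : famMult P x ≠ 0) :
    x ∈ P.biUnion id := by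
  rw [famMult, ← pos_iff_ne_zero, card_pos] at h
  obtain ⟨S, hS⟩ := h
  rw [mem_filter] at hS
  exact mem_biUnion.2 ⟨S, hS.1, hS.2⟩

lemma sum_famMult (m r : ℕ) (P : Finset (Finset ℕ)) (hP : IsSetFamily m r P)
    (s : Finset ℕ) (hs : ∀ S ∈ P, S ⊆ s) : ∑ x ∈ s, famMult P x = m * r := by
  unfold famMult
  have h1 : ∀ x ∈ s, (P.filter fun S => x ∈ S).card = ∑ S ∈ P, if x ∈ S then 1 else 0 := by
    intro x _; rw [card_filter]
  rw [Finset.sum_congr rfl h1, Finset.sum_comm]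
  have h2 : ∀ S ∈ P, (∑ x ∈ s, if x ∈ S then 1 else 0) = m := by
    intro S hS
    rw [Finset.sum_ite_mem, inter_eq_right.2 (hs S hS), Finset.sum_const, smul_eq_mul, mul_one]
    exact (hP.2 S hS).1
  rw [Finset.sum_congr rfl h2, Finset.sum_const, smul_eq_mul, hP.1, mul_comm]

lemma sort_getD_ge (A : Finset ℕ) (hA : ∀ x ∈ A, 1 ≤ x) :
    ∀ k, k < A.card → k + 1 ≤ (A.sort (· ≤ ·)).getD k 0 := by
  intro k
  induction k with
  | zero =>
    intro hk
    have hlen : (A.sort (· ≤ ·)).length = A.card := Finset.length_sort _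
    have h0 : 0 < (A.sort (· ≤ ·)).length := by omega
    rw [List.getD_eq_getElem _ _ h0]
    exact hA _ ((Finset.mem_sort _).1 (List.getElem_mem h0))
  | succ k ih =>
    intro hk
    have hlen : (A.sort (· ≤ ·)).length = A.card := Finset.length_sort _
    have h1 : k + 1 < (A.sort (· ≤ ·)).length := by omega
    have h0 : k < (A.sort (· ≤ ·)).length := by omega
    have hs := (Finset.sortedLT_sort A).pairwise
    have hlt := hs.rel_get_of_lt (a := ⟨k, h0⟩) (b := ⟨k+1, h1⟩) (by simp)
    have ihv := ih (by omega)
    rw [List.getD_eq_getElem _ _ h0] at ihv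
    rw [List.getD_eq_getElem _ _ h1]
    simp only [List.get_eq_getElem] at hlt
    omega

lemma hooklist_toFinset (m e : ℕ) (he : m ≤ e) (hm : 2 ≤ m) :
    (List.range' 1 (m - 1) ++ [e]).toFinset = insert e (Finset.Icc 1 (m - 1)) := by
  ext x
  simp only [List.toFinset_append, List.toFinset_cons, List.toFinset_nil, Finset.mem_union,
    List.mem_toFinset, List.mem_range'_1, Finset.mem_insert, Finset.mem_Icc, insert_empty_eq,
    Finset.mem_singleton]
  omega

lemma sort_hook (m e : ℕ) (hm : 2 ≤ m) (he : m ≤ e) :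
    (insert e (Finset.Icc 1 (m - 1))).sort (· ≤ ·) = List.range' 1 (m - 1) ++ [e] := by
  have hnd : (List.range' 1 (m - 1) ++ [e]).Nodup := by
    rw [List.nodup_append]
    refine ⟨List.nodup_range' , List.nodup_singleton _, ?_⟩
    intro x hx hx'
    rw [List.mem_range'_1] at hx
    simp
    omega
  rw [← hooklist_toFinset m e he hm, List.toFinset_sort _ hnd]
  rw [List.pairwise_append]
  refine ⟨(List.pairwise_lt_range' (s := 1) (n := m - 1)).imp le_of_lt, List.pairwise_singleton _ _, ?_⟩
  intro a ha b hb
  rw [List.mem_range'_1] at ha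
  simp at hb
  omega

lemma getD_hooklist (m e k : ℕ) (hm : 2 ≤ m) :
    (List.range' 1 (m - 1) ++ [e]).getD k 0 =
      if k < m - 1 then k + 1 else if k = m - 1 then e else 0 := by
  have hlen : (List.range' 1 (m - 1) ++ [e]).length = m := by simp; omega
  split_ifs with h1 h2
  · rw [List.getD_eq_getElem _ _ (by omega), List.getElem_append_left (by simp; omega)]
    rw [List.getElem_range']
    omega
  · rw [List.getD_eq_getElem _ _ (by omega), List.getElem_append_right (by simp; omega)]
    simp
  · apply List.getD_eq_default
    omega

lemma hook_closed (m r : ℕ) (hm : 2 ≤ m) : ClosedFam m (hookFam m r) := by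
  intro B hB A hcard hpos hmaj
  rw [hookFam, mem_image] at hB
  obtain ⟨j, hj, rfl⟩ := hB
  rw [mem_Icc] at hj
  have hje : m ≤ m - 1 + j := by omega
  have hBs := sort_hook m (m - 1 + j) hm hje
  set e := (A.sort (· ≤ ·)).getD (m - 1) 0 with he
  have hem : m ≤ e := by have := sort_getD_ge A hpos (m - 1) (by omega); omega
  have hej : e ≤ m - 1 + j := by
    have := hmaj (m - 1)
    rw [hBs, getD_hooklist _ _ _ hm, if_neg (by omega), if_pos rfl] at this
    omega
  have hlen : (A.sort (· ≤ ·)).length = m := by rw [Finset.length_sort, hcard]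
  have hAsort : A.sort (· ≤ ·) = List.range' 1 (m - 1) ++ [e] := by
    apply List.ext_getElem
    · simp [hlen]; omega
    · intro i h1 h2
      by_cases hi : i < m - 1
      · have hup := hmaj i
        rw [hBs, getD_hooklist _ _ _ hm, if_pos hi] at hup
        have hlo := sort_getD_ge A hpos i (by omega)
        rw [List.getD_eq_getElem _ _ h1] at hup hlo
        have hr : (List.range' 1 (m - 1) ++ [e])[i] = i + 1 := by
          have h3 := getD_hooklist m e i hm
          rw [List.getD_eq_getElem _ _ h2, if_pos hi] at h3; exact h3
        omega
      · have him : i = m - 1 := by rw [hlen] at h1; omega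
        subst him
        have hr : (List.range' 1 (m - 1) ++ [e])[m - 1] = e := by
          have h3 := getD_hooklist m e (m - 1) hm
          rw [List.getD_eq_getElem _ _ h2, if_neg (by omega), if_pos rfl] at h3; exact h3
        rw [hr, he, List.getD_eq_getElem _ _ h1]
  have hA : A = insert e (Finset.Icc 1 (m - 1)) := by
    have h4 := Finset.sort_toFinset A (· ≤ ·)
    rw [← h4, hAsort, hooklist_toFinset m e hem hm]
  rw [hookFam, mem_image]
  refine ⟨e - (m - 1), by rw [mem_Icc]; omega, ?_⟩
  show insert (m - 1 + (e - (m - 1))) (Finset.Icc 1 (m - 1)) = A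
  rw [hA]; congr 1; omega

lemma partSum_hook (m r : ℕ) (hm : 2 ≤ m) (hr : 1 ≤ r) (j : ℕ) :
    partSum (famMult (hookFam m r)) j = (m - 1) * min r j + r * min 1 j := by
  rw [partSum_eq_sum _ (Finset.Icc 1 (m + r - 1))
    (by intro x hx; rw [famMult_hook m r hm] at hx; rw [mem_Icc]
        split_ifs at hx <;> omega)]
  have hsplit : Finset.Icc 1 (m + r - 1) = Finset.Icc 1 (m - 1) ∪ Finset.Icc m (m + r - 1) := by
    ext x; simp only [mem_Icc, mem_union]; omega
  have hdisj : Disjoint (Finset.Icc 1 (m - 1)) (Finset.Icc m (m + r - 1)) := by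
    rw [Finset.disjoint_left]; intro a ha ha'; rw [mem_Icc] at ha ha'; omega
  rw [hsplit, Finset.sum_union hdisj]
  have e1 : ∀ x ∈ Finset.Icc 1 (m - 1), min (famMult (hookFam m r) x) j = min r j := by
    intro x hx; rw [mem_Icc] at hx; rw [famMult_hook m r hm, if_pos ⟨hx.1, hx.2⟩]
  have e2 : ∀ x ∈ Finset.Icc m (m + r - 1), min (famMult (hookFam m r) x) j = min 1 j := by
    intro x hx; rw [mem_Icc] at hx
    rw [famMult_hook m r hm, if_neg (by omega), if_pos ⟨hx.1, hx.2⟩]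
  rw [Finset.sum_congr rfl e1, Finset.sum_congr rfl e2, Finset.sum_const, Finset.sum_const,
    smul_eq_mul, smul_eq_mul, Nat.card_Icc, Nat.card_Icc]
  have c1 : m - 1 + 1 - 1 = m - 1 := by omega
  have c2 : m + r - 1 + 1 - m = r := by omega
  rw [c1, c2]

end Helpers


/-- For `m ≥ 2`, `r ≥ 1`, the family `hookFam m r` is a closed set family
of shape `(m^r)` whose type is defined and equals `(m+r-1, (m-1)^{r-1})` — i.e. its
multiplicity function is the conjugate of that partition — and it is a minimal set family. -/


theorem stmt_9 (m r : ℕ) (hm : 2 ≤ m) (hr : 1 ≤ r) :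
    IsSetFamily m r (hookFam m r) ∧
    ClosedFam m (hookFam m r) ∧
    TypeDefined (famMult (hookFam m r)) ∧
    (∀ x : ℕ, famMult (hookFam m r) x =
      if 1 ≤ x ∧ x ≤ m - 1 then r else if m ≤ x ∧ x ≤ m + r - 1 then 1 else 0) ∧
    ¬ ∃ P : Finset (Finset ℕ), IsSetFamily m r P ∧ TypeDefined (famMult P) ∧
        ConjStrictDom (famMult P) (famMult (hookFam m r)) := by
  have hfam : IsSetFamily m r (hookFam m r) := by
    constructor
    · rw [hookFam, Finset.card_image_of_injOn (hook_injOn m r), Nat.card_Icc]; omega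
    · intro S hS
      rw [hookFam, Finset.mem_image] at hS
      obtain ⟨j, hj, rfl⟩ := hS
      rw [Finset.mem_Icc] at hj
      constructor
      · rw [Finset.card_insert_of_notMem (by rw [Finset.mem_Icc]; omega), Nat.card_Icc]; omega
      · intro x hx
        rcases Finset.mem_insert.1 hx with h | h
        · omega
        · rw [Finset.mem_Icc] at h; omega
  refine ⟨hfam, hook_closed m r hm, ?_, fun x => famMult_hook m r hm x, ?_⟩
  · intro i j h1 hij
    rw [famMult_hook m r hm, famMult_hook m r hm]
    split_ifs <;> omega
  · rintro ⟨P, hP, hType, hDom, i, hi1, hine⟩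
    set g := famMult P with hg
    have hgr : ∀ x, g x ≤ r := fun x => hP.1 ▸ famMult_le P x
    set U := P.biUnion id with hU
    have hUpos : ∀ x ∈ U, 1 ≤ x := by
      intro x hx
      rw [hU, Finset.mem_biUnion] at hx
      obtain ⟨S, hS, hxS⟩ := hx
      exact (hP.2 S hS).2 x hxS
    have hsubU : ∀ S ∈ P, S ⊆ U := fun S hS x hx => Finset.mem_biUnion.2 ⟨S, hS, hx⟩
    have hsumU : ∑ x ∈ U, g x = m * r := sum_famMult m r P hP U hsubU
    set t := g (m - 1) with ht
    have htr : t ≤ r := hgr _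
    -- Claim A : t = r
    have hclaimA : t = r := by
      have hps : partSum g t = ∑ x ∈ U, min (g x) t :=
        partSum_eq_sum g U (fun x h => famMult_supp P x h) t
      have hub : partSum g t ≤ (m - 1) * min r t + r * min 1 t := by
        rw [← partSum_hook m r hm hr t]; exact hDom t
      have key : ∀ x ∈ U, g x ≤ min (g x) t + (if x ≤ m - 2 then r - t else 0) := by
        intro x hx
        by_cases hgt : g x ≤ t
        · rw [min_eq_left hgt]; omega
        · rw [min_eq_right (by omega)]
          split_ifs with hxm
          · have := hgr x; omega
          · exfalso
            have hx1 := hUpos x hx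
            have := hType (m - 1) x (by omega) (by omega)
            omega
      have hsum2 : ∑ x ∈ U, (if x ≤ m - 2 then r - t else 0) ≤ (m - 2) * (r - t) := by
        rw [Finset.sum_ite, Finset.sum_const, Finset.sum_const_zero, add_zero, smul_eq_mul]
        have hsb : U.filter (fun x => x ≤ m - 2) ⊆ Finset.Icc 1 (m - 2) := by
          intro x hx
          rw [Finset.mem_filter] at hx
          rw [Finset.mem_Icc]
          exact ⟨hUpos x hx.1, hx.2⟩
        have hcl := Finset.card_le_card hsb
        rw [Nat.card_Icc] at hcl
        apply Nat.mul_le_mul_right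
        omega
      have hlb : m * r ≤ partSum g t + (m - 2) * (r - t) := by
        calc m * r = ∑ x ∈ U, g x := hsumU.symm
          _ ≤ ∑ x ∈ U, (min (g x) t + if x ≤ m - 2 then r - t else 0) := Finset.sum_le_sum key
          _ = (∑ x ∈ U, min (g x) t) + ∑ x ∈ U, (if x ≤ m - 2 then r - t else 0) :=
              Finset.sum_add_distrib
          _ ≤ partSum g t + (m - 2) * (r - t) := by rw [hps]; exact Nat.add_le_add_left hsum2 _
      have hmr : (m - 2) * r + 2 * r = m * r := by
        rw [← Nat.add_mul]; congr 1; omega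
      rcases Nat.eq_zero_or_pos t with ht0 | ht1
      · exfalso
        simp only [ht0, Nat.min_zero, Nat.mul_zero, Nat.zero_add, Nat.sub_zero,
          Nat.add_zero] at hub hlb
        have h2 : m * r ≤ (m - 2) * r :=
          le_trans hlb (by simpa using Nat.add_le_add_right hub ((m - 2) * r))
        rw [← hmr, ← Nat.add_zero ((m - 2) * r)] at h2
        have h3 := Nat.le_of_add_le_add_left h2
        omega
      · have hexp : (m - 1) * t + (m - 2) * (r - t) = (m - 2) * r + t := by
          have hm1 : m - 1 = (m - 2) + 1 := by omega
          rw [hm1, Nat.add_mul, Nat.one_mul, Nat.add_right_comm, ← Nat.mul_add]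
          congr 2
          omega
        rw [min_eq_right htr, min_eq_left ht1] at hub
        have hfin : (m - 2) * r + 2 * r ≤ (m - 2) * r + (t + r) := by
          calc (m - 2) * r + 2 * r = m * r := hmr
            _ ≤ ((m - 1) * t + r * 1) + (m - 2) * (r - t) :=
              le_trans hlb (Nat.add_le_add_right hub _)
            _ = ((m - 1) * t + (m - 2) * (r - t)) + r * 1 := by ring
            _ = (m - 2) * r + (t + r) := by rw [hexp]; ring
        have hfin2 := Nat.le_of_add_le_add_left hfin
        omega
    have hgA : ∀ x, 1 ≤ x → x ≤ m - 1 → g x = r := by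
      intro x h1 h2
      have hle := hgr x
      have hge : t ≤ g x := hType x (m - 1) h1 (by omega)
      omega
    have hsub : ∀ S ∈ P, Finset.Icc 1 (m - 1) ⊆ S := by
      intro S hS x hx
      rw [Finset.mem_Icc] at hx
      have hfx : (P.filter fun T => x ∈ T).card = P.card := by
        rw [hP.1]; exact hgA x hx.1 hx.2
      have hfeq : P.filter (fun T => x ∈ T) = P :=
        Finset.eq_of_subset_of_card_le (Finset.filter_subset _ _) hfx.ge
      have hS' : S ∈ P.filter (fun T => x ∈ T) := by rw [hfeq]; exact hS
      exact (Finset.mem_filter.1 hS').2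
    set ψ : Finset ℕ → ℕ := fun S => (S \ Finset.Icc 1 (m - 1)).sup id with hψ
    have hdecomp : ∀ S ∈ P, S = insert (ψ S) (Finset.Icc 1 (m - 1)) ∧ m ≤ ψ S := by
      intro S hS
      have hcardd : (S \ Finset.Icc 1 (m - 1)).card = 1 := by
        rw [Finset.card_sdiff_of_subset (hsub S hS), (hP.2 S hS).1, Nat.card_Icc]; omega
      obtain ⟨e, he⟩ := Finset.card_eq_one.1 hcardd
      have heS : e ∈ S := by
        have h' : e ∈ S \ Finset.Icc 1 (m - 1) := he ▸ Finset.mem_singleton_self e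
        exact (Finset.mem_sdiff.1 h').1
      have heI : e ∉ Finset.Icc 1 (m - 1) := by
        have h' : e ∈ S \ Finset.Icc 1 (m - 1) := he ▸ Finset.mem_singleton_self e
        exact (Finset.mem_sdiff.1 h').2
      have hem : m ≤ e := by
        rw [Finset.mem_Icc, not_and, not_le] at heI
        have := (hP.2 S hS).2 e heS
        omega
      have hψe : ψ S = e := by
        rw [hψ]; simp only []; rw [he, Finset.sup_singleton, id]
      rw [hψe]
      refine ⟨?_, hem⟩
      ext x
      simp only [Finset.mem_insert]
      constructor
      · intro hx
        by_cases hxI : x ∈ Finset.Icc 1 (m - 1)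
        · exact Or.inr hxI
        · left
          have : x ∈ S \ Finset.Icc 1 (m - 1) := Finset.mem_sdiff.2 ⟨hx, hxI⟩
          rw [he, Finset.mem_singleton] at this
          exact this
      · rintro (rfl | hx)
        · exact heS
        · exact hsub S hS hx
    set E := P.image ψ with hE
    have hEcard : E.card = r := by
      rw [hE, Finset.card_image_of_injOn, hP.1]
      intro S hS T hT hval
      rw [(hdecomp S hS).1, (hdecomp T hT).1, hval]
    have hEm : ∀ e ∈ E, m ≤ e ∧ 1 ≤ g e := by
      intro e he
      rw [hE, Finset.mem_image] at he
      obtain ⟨S, hS, rfl⟩ := he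
      refine ⟨(hdecomp S hS).2, ?_⟩
      have hmemf : S ∈ P.filter fun T => ψ S ∈ T := by
        refine Finset.mem_filter.2 ⟨hS, ?_⟩
        have hins : ψ S ∈ insert (ψ S) (Finset.Icc 1 (m - 1)) := Finset.mem_insert_self _ _
        rwa [← (hdecomp S hS).1] at hins
      exact Finset.card_pos.2 ⟨S, hmemf⟩
    have hne : E.Nonempty := Finset.card_pos.1 (by rw [hEcard]; omega)
    have hmax : m + r - 1 ≤ E.max' hne := by
      have hsubE : E ⊆ Finset.Icc m (E.max' hne) := by
        intro e he
        rw [Finset.mem_Icc]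
        exact ⟨(hEm e he).1, Finset.le_max' E e he⟩
      have hcl := Finset.card_le_card hsubE
      rw [hEcard, Nat.card_Icc] at hcl
      omega
    have hgB : ∀ y, m ≤ y → y ≤ m + r - 1 → 1 ≤ g y := by
      intro y h1 h2
      have hgm : 1 ≤ g (E.max' hne) := (hEm _ (E.max'_mem hne)).2
      have := hType y (E.max' hne) (by omega) (by omega)
      omega
    set V := U ∪ Finset.Icc 1 (m + r - 1) with hV
    have hsumgV : ∑ x ∈ V, g x = m * r :=
      sum_famMult m r P hP V (fun S hS x hx => Finset.mem_union_left _ (hsubU S hS hx))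
    have hhsub : ∀ S ∈ hookFam m r, S ⊆ Finset.Icc 1 (m + r - 1) := by
      intro S hS x hx
      rw [hookFam, Finset.mem_image] at hS
      obtain ⟨j, hj, rfl⟩ := hS
      rw [Finset.mem_Icc] at hj ⊢
      rcases Finset.mem_insert.1 hx with h | h
      · omega
      · rw [Finset.mem_Icc] at h; omega
    have hsumfV : ∑ x ∈ V, famMult (hookFam m r) x = m * r :=
      sum_famMult m r (hookFam m r) hfam V
        (fun S hS x hx => Finset.mem_union_right _ (hhsub S hS hx))
    have hpw : ∀ x ∈ V, famMult (hookFam m r) x ≤ g x := by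
      intro x hx
      rw [famMult_hook m r hm]
      split_ifs with h1 h2
      · exact (hgA x h1.1 h1.2).ge
      · exact hgB x h2.1 h2.2
      · exact Nat.zero_le _
    have hiV : i ∈ V := by
      by_contra hiv
      have hgi : g i = 0 := by
        by_contra h
        exact hiv (Finset.mem_union_left _ (famMult_supp P i h))
      have hfi : famMult (hookFam m r) i = 0 := by
        rw [famMult_hook m r hm]
        have hnic : i ∉ Finset.Icc 1 (m + r - 1) := fun h => hiv (Finset.mem_union_right _ h)
        rw [Finset.mem_Icc, not_and, not_le] at hnic
        split_ifs <;> omega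
      exact hine (by rw [hgi, hfi])
    have hstrict : famMult (hookFam m r) i < g i := (hpw i hiV).lt_of_ne (Ne.symm hine)
    have hlt : ∑ x ∈ V, famMult (hookFam m r) x < ∑ x ∈ V, g x :=
      Finset.sum_lt_sum hpw ⟨i, hiV, hstrict⟩
    rw [hsumgV, hsumfV] at hlt
    exact lt_irrefl _ hlt
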